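/- Let M be a weakly quasiminimal pregeometry structure. If b̄ and b̄' are finite tuples from M with the same quantifier-free type, and ā is any finite tuple from M, then there exists a tuple ā' in M such that ā b̄ and ā' b̄' have the same quantifier-free type (i.e. M is ℵ₀-homogeneous over the empty set). -/

import Mathlib

open FirstOrder Set

namespace QM

/-- Equality of quantifier-free types of two assignments (possibly in different structures). -/
def EqQF (L : FirstOrder.Language) {M N : Type*} [L.Structure M] [L.Structure N]
    {α : Type*} (a : α → M) (b : α → N) : Prop :=
  ∀ φ : L.Formula α, φ.IsQF → (φ.Realize a ↔ φ.Realize b)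

/-- Equality of quantifier-free types over a parameter set `B`. -/
def EqQFOver (L : FirstOrder.Language) {M : Type*} [L.Structure M] (B : Set M) {n : ℕ}
    (a b : Fin n → M) : Prop :=
  ∀ (m : ℕ) (c : Fin m → M), (∀ i, c i ∈ B) →
    EqQF L (Sum.elim a c) (Sum.elim b c)

/-- A pregeometry (combinatorial closure with exchange). -/
structure Pregeom (M : Type*) where
  cl : Set M → Set M
  subset_cl : ∀ A, A ⊆ cl A
  mono : ∀ ⦃A B : Set M⦄, A ⊆ B → cl A ⊆ cl B
  cl_idem : ∀ A, cl (cl A) = cl A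
  finChar : ∀ (A : Set M) (x : M), x ∈ cl A → ∃ F : Finset M, ↑F ⊆ A ∧ x ∈ cl ↑F
  exchange : ∀ (A : Set M) (a b : M), a ∈ cl (insert b A) → a ∉ cl A → b ∈ cl (insert a A)

variable (L : FirstOrder.Language) (M : Type*) [L.Structure M] (P : Pregeom M)

def Indep (P : Pregeom M) (S : Set M) : Prop := ∀ x ∈ S, x ∉ P.cl (S \ {x})

/-- QM1: the pregeometry is determined by the language. -/
def QM1 : Prop :=
  ∀ (n : ℕ) (a a' : M) (b b' : Fin n → M),
    EqQF L (Fin.cons a b) (Fin.cons a' b') →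
    (a ∈ P.cl (Set.range b) ↔ a' ∈ P.cl (Set.range b'))

/-- QM2: infinite-dimensionality. -/
def QM2 : Prop := ∀ F : Finset M, P.cl ↑F ≠ Set.univ

/-- QM3: countable closure property. -/
def QM3 : Prop := ∀ F : Finset M, (P.cl ↑F).Countable

/-- QM4: uniqueness of the generic type. -/
def QM4 : Prop :=
  ∀ (ι : Type) [Countable ι] (h h' : ι → M),
    P.cl (Set.range h) = Set.range h → P.cl (Set.range h') = Set.range h' →
    EqQF L h h' →
    ∀ a a' : M, a ∉ Set.range h → a' ∉ Set.range h' →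
      EqQF L (Sum.elim h fun _ : Unit => a) (Sum.elim h' fun _ : Unit => a')

/-- QM5: ℵ₀-homogeneity over countable closed sets and the empty set. -/
def QM5 : Prop :=
  ∀ (ι : Type) [Countable ι] (h h' : ι → M) (n : ℕ) (b b' : Fin n → M),
    (P.cl (Set.range h) = Set.range h ∨ Set.range h = ∅) →
    (P.cl (Set.range h') = Set.range h' ∨ Set.range h' = ∅) →
    EqQF L (Sum.elim h b) (Sum.elim h' b') →
    ∀ a ∈ P.cl (Set.range h ∪ Set.range b),
      ∃ a' : M, EqQF L (Sum.elim (Sum.elim h b) fun _ : Unit => a)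
        (Sum.elim (Sum.elim h' b') fun _ : Unit => a')

/-- A weakly quasiminimal pregeometry structure: QM1, QM3, QM4, QM5. -/
structure IsWQPS : Prop where
  qm1 : QM1 L M P
  qm3 : QM3 M P
  qm4 : QM4 L M P
  qm5 : QM5 L M P

/-- A quasiminimal pregeometry structure: additionally QM2. -/
structure IsQPS extends IsWQPS L M P : Prop where
  qm2 : QM2 M P

/-- ℵ₀-homogeneity over the empty set. -/
def HomogEmpty : Prop :=
  ∀ (n m : ℕ) (b b' : Fin n → M), EqQF L b b' →
    ∀ a : Fin m → M, ∃ a' : Fin m → M, EqQF L (Sum.elim a b) (Sum.elim a' b')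

/-- `tp(ā/B)` splits over `A`. -/
def SplitsOver (B A : Set M) {n : ℕ} (a : Fin n → M) : Prop :=
  ∃ (m : ℕ) (c d : Fin m → M), (∀ i, c i ∈ B) ∧ (∀ i, d i ∈ B) ∧
    EqQFOver L A c d ∧ ¬ EqQFOver L (A ∪ Set.range a) c d

/-- `tp(b̄/B)` is s-isolated (for `b̄ ∈ cl B`). -/
def SIsolated (B : Set M) {n : ℕ} (b : Fin n → M) : Prop :=
  ∃ A₀ : Finset M, ↑A₀ ⊆ B ∧
    ∀ b' : Fin n → M, (∀ i, b' i ∈ P.cl B) →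
      EqQFOver L (↑A₀ : Set M) b' b → EqQFOver L B b' b



section EqQFAux

variable {Lg : FirstOrder.Language} {W : Type*} [Lg.Structure W]

theorem eqqf_refl {α : Type*} (a : α → W) : EqQF Lg a a := fun _ _ => Iff.rfl

theorem eqqf_symm {α : Type*} {a b : α → W} (h : EqQF Lg a b) : EqQF Lg b a :=
  fun φ hφ => (h φ hφ).symm

theorem eqqf_comp {α β : Type*} {a b : α → W} (h : EqQF Lg a b) (σ : β → α) :
    EqQF Lg (a ∘ σ) (b ∘ σ) := by
  intro φ hφ
  have := h (φ.relabel σ) (hφ.relabel (Sum.inl ∘ σ))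
  rwa [Language.Formula.realize_relabel, Language.Formula.realize_relabel] at this

theorem eqqf_congr {α β : Type*} {a b : α → W} {a' b' : β → W} (h : EqQF Lg a b) (σ : β → α)
    (ha : ∀ x, a' x = a (σ x)) (hb : ∀ x, b' x = b (σ x)) : EqQF Lg a' b' := by
  have ea : a' = a ∘ σ := funext ha
  have eb : b' = b ∘ σ := funext hb
  rw [ea, eb]
  exact eqqf_comp h σ

theorem exists_finset_realize {α : Type*} (φ : Lg.Formula α) :
    ∃ t : Finset α, ∀ v w : α → W, (∀ x ∈ t, v x = w x) → (φ.Realize v ↔ φ.Realize w) := by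
  classical
  refine ⟨φ.freeVarFinset, fun v w hvw => ?_⟩
  have hsub : ↑φ.freeVarFinset ⊆ (↑φ.freeVarFinset : Set α) := Set.Subset.rfl
  have hvw' : (v ∘ (↑) : (↑φ.freeVarFinset : Set α) → W) = w ∘ (↑) := by
    funext x
    exact hvw x (by exact_mod_cast x.2)
  show Language.BoundedFormula.Realize φ v default ↔ Language.BoundedFormula.Realize φ w default
  rw [← Language.BoundedFormula.realize_restrictFreeVar' hsub (v := v),
    ← Language.BoundedFormula.realize_restrictFreeVar' hsub (v := w), hvw']

end EqQFAux

section PregeomAux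

variable {W : Type*} [DecidableEq W] (G : Pregeom W)

theorem pg_reach : ∀ (B A : Finset W), (∀ x ∈ B, x ∉ A) → ∀ s : W,
    s ∈ G.cl ↑(A ∪ B) → s ∉ G.cl ↑A →
    ∃ t ∈ B, ∃ C : Finset W, ↑C ⊆ (↑(A ∪ B) : Set W) \ {t} ∧ s ∉ G.cl ↑C ∧
      s ∈ G.cl (insert t ↑C) := by
  classical
  intro B
  induction B using Finset.strongInduction with
  | _ B ih =>
    intro A hd s hs hsA
    by_cases hex : ∃ t ∈ B, s ∈ G.cl ↑(A ∪ B.erase t)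
    · obtain ⟨t, htB, hcl⟩ := hex
      obtain ⟨t', ht', C, hC, h1, h2⟩ :=
        ih (B.erase t) (Finset.erase_ssubset htB) A
          (fun x hx => hd x (Finset.mem_of_mem_erase hx)) s hcl hsA
      refine ⟨t', Finset.mem_of_mem_erase ht', C, ?_, h1, h2⟩
      refine hC.trans (Set.diff_subset_diff_left ?_)
      exact_mod_cast Finset.union_subset_union_right (Finset.erase_subset _ _)
    · push_neg at hex
      rcases B.eq_empty_or_nonempty with hB | ⟨t, htB⟩
      · exfalso
        rw [hB, Finset.union_empty] at hs
        exact hsA hs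
      · refine ⟨t, htB, A ∪ B.erase t, ?_, hex t htB, ?_⟩
        · intro x hx
          simp only [Finset.coe_union, Set.mem_union, Finset.coe_erase] at hx
          constructor
          · simp only [Finset.coe_union, Set.mem_union]
            rcases hx with hx | hx
            · exact Or.inl hx
            · exact Or.inr (by exact_mod_cast Finset.mem_of_mem_erase (by exact_mod_cast hx))
          · simp only [Set.mem_singleton_iff]
            rintro rfl
            rcases hx with hx | hx
            · exact hd _ htB hx
            · exact (Finset.notMem_erase _ _) (by exact_mod_cast hx)
        · have : insert t (↑(A ∪ B.erase t) : Set W) = ↑(A ∪ B) := by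
            ext z
            simp only [Set.mem_insert_iff, Finset.coe_union, Set.mem_union, Finset.coe_erase,
              Set.mem_diff, Set.mem_singleton_iff, Finset.mem_coe]
            constructor
            · rintro (rfl | hz | ⟨hz, _⟩)
              · exact Or.inr htB
              · exact Or.inl hz
              · exact Or.inr hz
            · rintro (hz | hz)
              · exact Or.inr (Or.inl hz)
              · by_cases hzt : z = t
                · exact Or.inl hzt
                · exact Or.inr (Or.inr ⟨hz, hzt⟩)
          rw [this]
          exact hs

theorem pg_steinitz : ∀ (d : ℕ) (S T : Finset W), (S \ T).card = d →
    (∀ x ∈ S, x ∉ G.cl (↑S \ {x})) → ↑S ⊆ G.cl ↑T → S.card ≤ T.card := by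
  classical
  intro d
  induction d with
  | zero =>
    intro S T hd _ _
    exact Finset.card_le_card (Finset.sdiff_eq_empty_iff_subset.mp (Finset.card_eq_zero.mp hd))
  | succ d ihd =>
    intro S T hd hind hsub
    have hSTne : (S \ T).Nonempty := Finset.card_pos.mp (by omega)
    obtain ⟨s, hsST⟩ := hSTne
    have hsS : s ∈ S := (Finset.mem_sdiff.mp hsST).1
    have hsT : s ∉ T := (Finset.mem_sdiff.mp hsST).2
    have hTsplit : (T ∩ S) ∪ (T \ S) = T := (Finset.union_comm _ _).trans (Finset.sdiff_union_inter T S)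
    have hd' : ∀ x ∈ T \ S, x ∉ T ∩ S := by
      intro x hx hx'
      exact (Finset.mem_sdiff.mp hx).2 (Finset.mem_inter.mp hx').2
    have hsA : s ∉ G.cl ↑(T ∩ S) := by
      intro hscl
      refine hind s hsS (G.mono ?_ hscl)
      intro z hz
      simp only [Finset.coe_inter, Set.mem_inter_iff, Finset.mem_coe] at hz
      refine ⟨by exact_mod_cast hz.2, ?_⟩
      simp only [Set.mem_singleton_iff]
      rintro rfl
      exact hsT (by exact_mod_cast hz.1)
    have hscl : s ∈ G.cl ↑((T ∩ S) ∪ (T \ S)) := by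
      rw [hTsplit]; exact hsub (by exact_mod_cast hsS)
    obtain ⟨t, htTS, C, hC, hsC, hsiC⟩ := pg_reach G (T \ S) (T ∩ S) hd' s hscl hsA
    rw [hTsplit] at hC
    have htT : t ∈ T := (Finset.mem_sdiff.mp htTS).1
    have htS : t ∉ S := (Finset.mem_sdiff.mp htTS).2
    have hts : t ≠ s := fun h => htS (h ▸ hsS)
    -- exchange
    have htcl : t ∈ G.cl (insert s ↑C) := G.exchange _ s t hsiC hsC
    set T' : Finset W := insert s (T.erase t) with hT'
    have hT'coe : (↑T' : Set W) = insert s ((↑T : Set W) \ {t}) := by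
      simp [hT', Finset.coe_insert, Finset.coe_erase]
    have hTsub : ↑T ⊆ G.cl ↑T' := by
      intro z hz
      by_cases hzt : z = t
      · subst hzt
        refine G.mono ?_ htcl
        rw [hT'coe]
        intro y hy
        rcases Set.mem_insert_iff.mp hy with rfl | hy
        · exact Set.mem_insert _ _
        · exact Set.mem_insert_of_mem _ (hC hy)
      · apply G.subset_cl
        rw [hT'coe]
        exact Set.mem_insert_of_mem _ ⟨hz, hzt⟩
    have hsub' : ↑S ⊆ G.cl ↑T' := by
      refine hsub.trans ?_
      have := G.mono hTsub
      rwa [G.cl_idem] at this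
    have hcardT' : T'.card ≤ T.card := by
      rw [hT', Finset.card_insert_of_notMem (fun h => hsT (Finset.mem_of_mem_erase h))]
      rw [Finset.card_erase_of_mem htT]
      have : 1 ≤ T.card := Finset.card_pos.mpr ⟨t, htT⟩
      omega
    have hST' : S \ T' = (S \ T).erase s := by
      ext z
      simp only [Finset.mem_sdiff, hT', Finset.mem_insert, Finset.mem_erase, not_or, not_and]
      constructor
      · rintro ⟨hzS, hzs, hzT⟩
        refine ⟨hzs, hzS, fun hzT' => ?_⟩
        by_cases hzt : z = t
        · exact htS (hzt ▸ hzS)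
        · exact (hzT hzt) hzT'
      · rintro ⟨hzs, hzS, hzT⟩
        exact ⟨hzS, hzs, fun hzt hzT' => hzT hzT'⟩
    have hcard' : (S \ T').card = d := by
      rw [hST', Finset.card_erase_of_mem hsST, hd]
      omega
    exact (ihd S T' hcard' hind hsub').trans hcardT'

end PregeomAux


/-- Iterated snoc-extension of a pair of finite tuples by a step function. -/
noncomputable def chainFn {W : Type*} (step : ∀ N : ℕ, (Fin N → W) → (Fin N → W) → W × W) :
    ∀ N : ℕ, (Fin N → W) × (Fin N → W)
  | 0 => (Fin.elim0, Fin.elim0)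
  | N + 1 =>
      (Fin.snoc (chainFn step N).1 (step N (chainFn step N).1 (chainFn step N).2).1,
        Fin.snoc (chainFn step N).2 (step N (chainFn step N).1 (chainFn step N).2).2)

theorem chainFn_zero {W : Type*} (step : ∀ N : ℕ, (Fin N → W) → (Fin N → W) → W × W) :
    chainFn step 0 = (Fin.elim0, Fin.elim0) := by rw [chainFn]

theorem chainFn_succ {W : Type*} (step : ∀ N : ℕ, (Fin N → W) → (Fin N → W) → W × W) (N : ℕ) :
    chainFn step (N + 1) =
      (Fin.snoc (chainFn step N).1 (step N (chainFn step N).1 (chainFn step N).2).1,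
        Fin.snoc (chainFn step N).2 (step N (chainFn step N).1 (chainFn step N).2).2) := by
  rw [chainFn]

theorem chain_build {W : Type*} [Nonempty W] (Q : ∀ N : ℕ, (Fin N → W) → (Fin N → W) → Prop)
    (R R' : W → Prop) (e e' : ℕ → W)
    (h0 : Q 0 Fin.elim0 Fin.elim0)
    (hstep : ∀ N u v, Q N u v → ∃ w w', Q (N + 1) (Fin.snoc u w) (Fin.snoc v w') ∧ R w ∧ R' w'
      ∧ (Even N → w = e (N / 2)) ∧ (¬ Even N → w' = e' (N / 2))) :
    ∃ u v : ℕ → W, (∀ N, Q N (fun i : Fin N => u i) (fun i : Fin N => v i)) ∧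
      (∀ n, R (u n)) ∧ (∀ n, R' (v n)) ∧ (∀ i, u (2 * i) = e i) ∧ (∀ i, v (2 * i + 1) = e' i) := by
  classical
  have hstep' : ∀ (N : ℕ) (u v : Fin N → W), ∃ ww : W × W, Q N u v →
      Q (N + 1) (Fin.snoc u ww.1) (Fin.snoc v ww.2) ∧ R ww.1 ∧ R' ww.2 ∧
      (Even N → ww.1 = e (N / 2)) ∧ (¬ Even N → ww.2 = e' (N / 2)) := by
    intro N u v
    by_cases h : Q N u v
    · obtain ⟨w, w', h1, h2, h3, h4, h5⟩ := hstep N u v h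
      exact ⟨(w, w'), fun _ => ⟨h1, h2, h3, h4, h5⟩⟩
    · exact ⟨(Classical.arbitrary W, Classical.arbitrary W), fun h' => absurd h' h⟩
  set F : ∀ N : ℕ, (Fin N → W) → (Fin N → W) → W × W :=
    fun N u v => (hstep' N u v).choose with hF
  have hQ : ∀ N, Q N (chainFn F N).1 (chainFn F N).2 := by
    intro N
    induction N with
    | zero => rw [chainFn_zero]; exact h0
    | succ N ih =>
      rw [chainFn_succ]
      have h := (hstep' N (chainFn F N).1 (chainFn F N).2).choose_spec ih
      simp only [hF]
      exact h.1
  have hspec : ∀ N, R ((F N (chainFn F N).1 (chainFn F N).2).1) ∧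
      R' ((F N (chainFn F N).1 (chainFn F N).2).2) ∧
      (Even N → (F N (chainFn F N).1 (chainFn F N).2).1 = e (N / 2)) ∧
      (¬ Even N → (F N (chainFn F N).1 (chainFn F N).2).2 = e' (N / 2)) := by
    intro N
    have h := (hstep' N (chainFn F N).1 (chainFn F N).2).choose_spec (hQ N)
    simp only [hF]
    exact ⟨h.2.1, h.2.2.1, h.2.2.2.1, h.2.2.2.2⟩
  set u : ℕ → W := fun n => (chainFn F (n + 1)).1 (Fin.last n) with hu
  set v : ℕ → W := fun n => (chainFn F (n + 1)).2 (Fin.last n) with hv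
  have hval : ∀ n, u n = (F n (chainFn F n).1 (chainFn F n).2).1 ∧
      v n = (F n (chainFn F n).1 (chainFn F n).2).2 := by
    intro n
    rw [hu, hv]
    simp only [chainFn_succ, Fin.snoc_last]
    exact ⟨trivial, trivial⟩
  have hcompat : ∀ N (i : Fin N), (chainFn F N).1 i = u i.val ∧ (chainFn F N).2 i = v i.val := by
    intro N
    induction N with
    | zero => exact fun i => i.elim0
    | succ N ihN =>
      intro i
      induction i using Fin.lastCases with
      | last =>
        rw [hu, hv]
        exact ⟨rfl, rfl⟩
      | cast j =>
        rw [chainFn_succ]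
        simp only [Fin.snoc_castSucc, Fin.coe_castSucc]
        exact ihN j
  refine ⟨u, v, ?_, ?_, ?_, ?_, ?_⟩
  · intro N
    have e1 : (fun i : Fin N => u i.val) = (chainFn F N).1 := funext fun i => ((hcompat N i).1).symm
    have e2 : (fun i : Fin N => v i.val) = (chainFn F N).2 := funext fun i => ((hcompat N i).2).symm
    rw [e1, e2]
    exact hQ N
  · intro n
    rw [(hval n).1]
    exact (hspec n).1
  · intro n
    rw [(hval n).2]
    exact (hspec n).2.1
  · intro i
    rw [(hval (2 * i)).1, (hspec (2 * i)).2.2.1 (even_two_mul i)]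
    congr 1
    omega
  · intro i
    have hodd : ¬ Even (2 * i + 1) := by simp [Nat.even_add_one, Nat.even_mul]
    rw [(hval (2 * i + 1)).2, (hspec (2 * i + 1)).2.2.2 hodd]
    congr 1
    omega


section MainAux

variable {Lg : FirstOrder.Language} {W : Type*} [Lg.Structure W] {G : Pregeom W}

theorem cl_drop (G : Pregeom W) {k : ℕ} (c : Fin (k + 1) → W) (i : Fin (k + 1))
    (hi : c i ∈ G.cl (range (c ∘ i.succAbove))) :
    G.cl (range (c ∘ i.succAbove)) = G.cl (range c) := by
  apply subset_antisymm
  · exact G.mono (Set.range_comp_subset_range _ _)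
  · have hsub : range c ⊆ G.cl (range (c ∘ i.succAbove)) := by
      rintro z ⟨j, rfl⟩
      by_cases hji : j = i
      · subst hji; exact hi
      · obtain ⟨j', hj'⟩ := Fin.exists_succAbove_eq hji
        exact G.subset_cl _ ⟨j', by rw [Function.comp_apply, hj']⟩
    have := G.mono hsub
    rwa [G.cl_idem] at this

theorem snoc_extend (hW : IsWQPS Lg W G) {k N : ℕ} {c c' : Fin k → W} {u v : Fin N → W}
    (hcv : EqQF Lg (Sum.elim c u) (Sum.elim c' v)) {z : W} (hz : z ∈ G.cl (range c)) :
    ∃ z', EqQF Lg (Sum.elim c (Fin.snoc u z)) (Sum.elim c' (Fin.snoc v z')) ∧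
      z' ∈ G.cl (range c') := by
  set B : Fin (k + N) → W := fun i => Sum.elim c u (finSumFinEquiv.symm i) with hB
  set B' : Fin (k + N) → W := fun i => Sum.elim c' v (finSumFinEquiv.symm i) with hB'
  have hBB' : EqQF Lg B B' := eqqf_comp hcv finSumFinEquiv.symm
  have hmain : EqQF Lg (Sum.elim (fun e : Empty => e.elim) B)
      (Sum.elim (fun e : Empty => e.elim) B') := by
    refine eqqf_congr hBB' (Sum.elim (fun e : Empty => e.elim) id) ?_ ?_ <;>
    · rintro (e | i)
      · exact e.elim
      · rfl
  have hrange : range (fun e : Empty => (e.elim : W)) = (∅ : Set W) := Set.range_eq_empty _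
  have hsubB : z ∈ G.cl (range (fun e : Empty => (e.elim : W)) ∪ range B) := by
    rw [hrange, Set.empty_union]
    refine G.mono ?_ hz
    rintro w ⟨j, rfl⟩
    exact ⟨finSumFinEquiv (Sum.inl j), by simp [hB]⟩
  obtain ⟨z', hz'⟩ := hW.qm5 Empty (fun e => e.elim) (fun e => e.elim) (k + N) B B'
    (Or.inr hrange) (Or.inr hrange) hmain z hsubB
  have hcons : EqQF Lg (Fin.cons z c) (Fin.cons z' c') := by
    refine eqqf_congr hz'
      (Fin.cases (Sum.inr ()) (fun j => Sum.inl (Sum.inr (finSumFinEquiv (Sum.inl j))))) ?_ ?_ <;>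
    · intro i
      induction i using Fin.cases with
      | zero => simp
      | succ j => simp [hB, hB']
  refine ⟨z', ?_, (hW.qm1 k z z' c c' hcons).mp hz⟩
  refine eqqf_congr hz'
    (Sum.elim (fun j : Fin k => Sum.inl (Sum.inr (finSumFinEquiv (Sum.inl j))))
      (Fin.lastCases (Sum.inr ())
        (fun i : Fin N => Sum.inl (Sum.inr (finSumFinEquiv (Sum.inr i)))))) ?_ ?_ <;>
  · rintro (j | i)
    · simp [hB, hB']
    · induction i using Fin.lastCases with
      | last => simp
      | cast i => simp [hB, hB']

theorem compl_transfer (hW : IsWQPS Lg W G) : ∀ (k : ℕ) (c c' : Fin k → W), EqQF Lg c c' →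
    ∀ x, x ∉ G.cl (range c) → ∃ y, y ∉ G.cl (range c') := by
  intro k
  induction k with
  | zero =>
    intro c c' _ x hx
    refine ⟨x, ?_⟩
    have h1 : range c = range c' := by rw [Set.range_eq_empty c, Set.range_eq_empty c']
    rwa [← h1]
  | succ k ih =>
    intro c c' hcc x hx
    by_cases hdep : ∃ i, c i ∈ G.cl (range (c ∘ i.succAbove))
    · obtain ⟨i, hi⟩ := hdep
      have hcons : EqQF Lg (Fin.cons (c i) (c ∘ i.succAbove))
          (Fin.cons (c' i) (c' ∘ i.succAbove)) := by
        refine eqqf_congr hcc (Fin.cons i i.succAbove) ?_ ?_ <;>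
        · intro j
          induction j using Fin.cases with
          | zero => simp
          | succ j => simp
      have hi' : c' i ∈ G.cl (range (c' ∘ i.succAbove)) :=
        (hW.qm1 k (c i) (c' i) _ _ hcons).mp hi
      have hclc : G.cl (range (c ∘ i.succAbove)) = G.cl (range c) := cl_drop G c i hi
      have hclc' : G.cl (range (c' ∘ i.succAbove)) = G.cl (range c') := cl_drop G c' i hi'
      obtain ⟨y, hy⟩ := ih (c ∘ i.succAbove) (c' ∘ i.succAbove) (eqqf_comp hcc _) x
        (by rwa [hclc])
      exact ⟨y, by rwa [hclc'] at hy⟩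
    · push_neg at hdep
      by_contra hcon
      push_neg at hcon
      have hinj : Function.Injective c := by
        intro i j hij
        by_contra hne
        apply hdep i
        have hji : j ≠ i := fun h => hne h.symm
        obtain ⟨j', hj'⟩ := Fin.exists_succAbove_eq hji
        exact G.subset_cl _ ⟨j', by rw [Function.comp_apply, hj', ← hij]⟩
      classical
      set S : Finset W := Finset.image c Finset.univ with hS
      have hScoe : (↑S : Set W) = range c := by simp [hS]
      have hxS : x ∉ (↑S : Set W) := fun h => hx (G.subset_cl _ (hScoe ▸ h))
      set S' : Finset W := insert x S with hS'
      have hS'coe : (↑S' : Set W) = insert x (range c) := by rw [hS', Finset.coe_insert, hScoe]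
      have hcardS : S.card = k + 1 := by
        rw [hS, Finset.card_image_of_injective _ hinj, Finset.card_univ, Fintype.card_fin]
      have hcardS' : S'.card = k + 2 := by
        rw [hS', Finset.card_insert_of_notMem (fun h => hxS (by exact_mod_cast h)), hcardS]
      have hrangesa : ∀ i : Fin (k + 1), range c \ {c i} = range (c ∘ i.succAbove) := by
        intro i
        ext z
        constructor
        · rintro ⟨⟨j, rfl⟩, hz⟩
          have hji : j ≠ i := by
            intro h
            exact hz (by rw [h]; rfl)
          obtain ⟨j', hj'⟩ := Fin.exists_succAbove_eq hji
          exact ⟨j', by rw [Function.comp_apply, hj']⟩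
        · rintro ⟨j', rfl⟩
          refine ⟨⟨i.succAbove j', rfl⟩, ?_⟩
          simp only [Set.mem_singleton_iff, Function.comp_apply]
          intro h
          exact (Fin.succAbove_ne i j') (hinj h)
      have hindep : ∀ y ∈ S', y ∉ G.cl (↑S' \ {y}) := by
        intro y hyS'
        rw [hS'] at hyS'
        rcases Finset.mem_insert.mp hyS' with rfl | hyS
        · have hset : (↑S' : Set W) \ {y} = range c := by
            rw [hS'coe]
            ext z
            simp only [Set.mem_diff, Set.mem_insert_iff, Set.mem_singleton_iff]
            constructor
            · rintro ⟨rfl | hz, hzx⟩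
              · exact absurd rfl hzx
              · exact hz
            · intro hz
              exact ⟨Or.inr hz, fun h => hx (G.subset_cl _ (h ▸ hz))⟩
          rw [hset]
          exact hx
        · rw [hS] at hyS
          obtain ⟨i, -, rfl⟩ := Finset.mem_image.mp hyS
          intro hmem
          have hseteq : (↑S' : Set W) \ {c i} = insert x (range (c ∘ i.succAbove)) := by
            rw [hS'coe, ← hrangesa i]
            ext z
            simp only [Set.mem_diff, Set.mem_insert_iff, Set.mem_singleton_iff]
            constructor
            · rintro ⟨rfl | hz, hzc⟩
              · exact Or.inl rfl
              · exact Or.inr ⟨hz, hzc⟩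
            · rintro (rfl | ⟨hz, hzc⟩)
              · exact ⟨Or.inl rfl, fun h => hx (G.subset_cl _ (h ▸ ⟨i, rfl⟩))⟩
              · exact ⟨Or.inr hz, hzc⟩
          rw [hseteq] at hmem
          have hx2 : x ∈ G.cl (insert (c i) (range (c ∘ i.succAbove))) :=
            G.exchange _ (c i) x hmem (hdep i)
          apply hx
          have hsub2 : insert (c i) (range (c ∘ i.succAbove)) ⊆ range c := by
            intro z hz
            rcases Set.mem_insert_iff.mp hz with rfl | ⟨j', rfl⟩
            · exact ⟨i, rfl⟩
            · exact ⟨i.succAbove j', rfl⟩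
          exact G.mono hsub2 hx2
      set T : Finset W := Finset.image c' Finset.univ with hT
      have hTcard : T.card ≤ k + 1 := by
        rw [hT]
        exact (Finset.card_image_le).trans (by simp)
      have hsub : (↑S' : Set W) ⊆ G.cl ↑T := by
        intro z _
        have hTcoe : (↑T : Set W) = range c' := by simp [hT]
        rw [hTcoe]
        exact hcon z
      have := pg_steinitz G (S' \ T).card S' T rfl hindep hsub
      omega

theorem exists_enum (hW : IsWQPS Lg W G) {k : ℕ} (c c' : Fin k → W) (hcc : EqQF Lg c c')
    (hne : (G.cl (range c)).Nonempty) :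
    ∃ u v : ℕ → W, EqQF Lg (Sum.elim c u) (Sum.elim c' v) ∧
      range u = G.cl (range c) ∧ range v = G.cl (range c') := by
  classical
  have hcount : (G.cl (range c)).Countable := by
    have := hW.qm3 (Finset.image c Finset.univ)
    simpa using this
  have hcount' : (G.cl (range c')).Countable := by
    have := hW.qm3 (Finset.image c' Finset.univ)
    simpa using this
  have hne' : (G.cl (range c')).Nonempty := by
    rcases isEmpty_or_nonempty (Fin k) with hk | hk
    · have hrr : range c = range c' := by rw [Set.range_eq_empty c, Set.range_eq_empty c']
      rwa [← hrr]
    · exact ⟨c' (Classical.arbitrary _), G.subset_cl _ ⟨_, rfl⟩⟩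
  obtain ⟨e, he⟩ := Set.Countable.exists_eq_range hcount hne
  obtain ⟨e', he'⟩ := Set.Countable.exists_eq_range hcount' hne'
  haveI : Nonempty W := ⟨hne.choose⟩
  have h0 : EqQF Lg (Sum.elim c (Fin.elim0 : Fin 0 → W)) (Sum.elim c' Fin.elim0) := by
    refine eqqf_congr hcc (Sum.elim id Fin.elim0) ?_ ?_ <;>
    · rintro (j | i)
      · rfl
      · exact i.elim0
  have hstep : ∀ N (u v : Fin N → W), EqQF Lg (Sum.elim c u) (Sum.elim c' v) →
      ∃ w w', EqQF Lg (Sum.elim c (Fin.snoc u w)) (Sum.elim c' (Fin.snoc v w')) ∧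
        w ∈ G.cl (range c) ∧ w' ∈ G.cl (range c') ∧
        (Even N → w = e (N / 2)) ∧ (¬ Even N → w' = e' (N / 2)) := by
    intro N u v hQ
    by_cases hEv : Even N
    · have hw : e (N / 2) ∈ G.cl (range c) := by rw [he]; exact ⟨N / 2, rfl⟩
      obtain ⟨w', h1, h2⟩ := snoc_extend hW hQ hw
      exact ⟨e (N / 2), w', h1, hw, h2, fun _ => rfl, fun h => absurd hEv h⟩
    · have hw' : e' (N / 2) ∈ G.cl (range c') := by rw [he']; exact ⟨N / 2, rfl⟩
      obtain ⟨w, h1, h2⟩ := snoc_extend hW (eqqf_symm hQ) hw'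
      exact ⟨w, e' (N / 2), eqqf_symm h1, h2, hw', fun h => absurd h hEv, fun _ => rfl⟩
  obtain ⟨u, v, hQ, hRu, hRv, hcov, hcov'⟩ :=
    chain_build (fun N u v => EqQF Lg (Sum.elim c u) (Sum.elim c' v))
      (· ∈ G.cl (range c)) (· ∈ G.cl (range c')) e e' h0 hstep
  refine ⟨u, v, ?_, ?_, ?_⟩
  · intro φ hφ
    obtain ⟨t, ht⟩ := exists_finset_realize (W := W) φ
    set N : ℕ := (t.sup (Sum.elim (fun _ => 0) id)) + 1 with hN
    have hlt : ∀ n : ℕ, (Sum.inr n : Fin k ⊕ ℕ) ∈ t → n < N := by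
      intro n hn
      have hle := Finset.le_sup (f := Sum.elim (fun _ => (0 : ℕ)) id) hn
      simp only [Sum.elim_inr, id] at hle
      omega
    set ρ : Fin k ⊕ ℕ → Fin k ⊕ Fin N :=
      Sum.map id (fun n => if h : n < N then ⟨n, h⟩ else ⟨0, by omega⟩) with hρ
    have hagree1 : ∀ x ∈ t, Sum.elim c u x = ((Sum.elim c fun i : Fin N => u i) ∘ ρ) x := by
      rintro (j | n) hx
      · simp [hρ]
      · have hn := hlt n hx
        simp [hρ, hn]
    have hagree2 : ∀ x ∈ t, Sum.elim c' v x = ((Sum.elim c' fun i : Fin N => v i) ∘ ρ) x := by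
      rintro (j | n) hx
      · simp [hρ]
      · have hn := hlt n hx
        simp [hρ, hn]
    have hmid : (φ.relabel ρ).Realize (Sum.elim c fun i : Fin N => u i) ↔
        (φ.relabel ρ).Realize (Sum.elim c' fun i : Fin N => v i) :=
      hQ N (φ.relabel ρ) (hφ.relabel (Sum.inl ∘ ρ))
    rw [Language.Formula.realize_relabel, Language.Formula.realize_relabel] at hmid
    calc φ.Realize (Sum.elim c u)
        ↔ φ.Realize ((Sum.elim c fun i : Fin N => u i) ∘ ρ) := ht _ _ hagree1
      _ ↔ φ.Realize ((Sum.elim c' fun i : Fin N => v i) ∘ ρ) := hmid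
      _ ↔ φ.Realize (Sum.elim c' v) := (ht _ _ hagree2).symm
  · apply subset_antisymm
    · rintro z ⟨n, rfl⟩
      exact hRu n
    · rw [he]
      rintro z ⟨i, rfl⟩
      exact ⟨2 * i, hcov i⟩
  · apply subset_antisymm
    · rintro z ⟨n, rfl⟩
      exact hRv n
    · rw [he']
      rintro z ⟨i, rfl⟩
      exact ⟨2 * i + 1, hcov' i⟩

theorem step_generic (hW : IsWQPS Lg W G) {k : ℕ} (c c' : Fin k → W) (hcc : EqQF Lg c c')
    (hne : (G.cl (range c)).Nonempty) {x : W} (hx : x ∉ G.cl (range c)) :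
    ∃ x', EqQF Lg (Fin.cons x c) (Fin.cons x' c') := by
  obtain ⟨u, v, hEq, hru, hrv⟩ := exists_enum hW c c' hcc hne
  obtain ⟨x', hx'⟩ := compl_transfer hW k c c' hcc x hx
  have hcl : G.cl (range (Sum.elim c u)) = range (Sum.elim c u) := by
    rw [Set.Sum.elim_range, hru, Set.union_eq_self_of_subset_left (G.subset_cl _)]
    exact G.cl_idem _
  have hcl' : G.cl (range (Sum.elim c' v)) = range (Sum.elim c' v) := by
    rw [Set.Sum.elim_range, hrv, Set.union_eq_self_of_subset_left (G.subset_cl _)]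
    exact G.cl_idem _
  have h4 := hW.qm4 (Fin k ⊕ ℕ) (Sum.elim c u) (Sum.elim c' v) hcl hcl' hEq x x'
    (by rw [Set.Sum.elim_range, hru, Set.union_eq_self_of_subset_left (G.subset_cl _)]; exact hx)
    (by rw [Set.Sum.elim_range, hrv, Set.union_eq_self_of_subset_left (G.subset_cl _)]; exact hx')
  refine ⟨x', eqqf_congr h4 (Fin.cases (Sum.inr ()) (fun j => Sum.inl (Sum.inl j))) ?_ ?_⟩ <;>
  · intro i
    induction i using Fin.cases with
    | zero => simp
    | succ j => simp

theorem step_one (hW : IsWQPS Lg W G) {k : ℕ} (c c' : Fin k → W) (hcc : EqQF Lg c c') (x : W) :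
    ∃ x', EqQF Lg (Fin.cons x c) (Fin.cons x' c') := by
  by_cases hx : x ∈ G.cl (range c)
  · obtain ⟨x', hx', -⟩ := snoc_extend hW (u := (Fin.elim0 : Fin 0 → W))
      (v := (Fin.elim0 : Fin 0 → W))
      (by
        refine eqqf_congr hcc (Sum.elim id Fin.elim0) ?_ ?_ <;>
        · rintro (j | i)
          · rfl
          · exact i.elim0) hx
    refine ⟨x', eqqf_congr hx' (Fin.cases (Sum.inr (Fin.last 0)) Sum.inl) ?_ ?_⟩ <;>
    · intro i
      induction i using Fin.cases with
      | zero =>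
        simp only [Fin.cases_zero, Sum.elim_inr]
        rw [Fin.cons_zero, Fin.snoc_last]
      | succ j => simp
  · by_cases hcl : (G.cl (range c)).Nonempty
    · exact step_generic hW c c' hcc hcl hx
    · have hemp : IsEmpty (Fin k) :=
        ⟨fun i => hcl ⟨c i, G.subset_cl _ ⟨i, rfl⟩⟩⟩
      have hceq : c = c' := funext fun i => hemp.elim i
      exact ⟨x, by rw [hceq]; exact eqqf_refl _⟩

end MainAux


/-- every weakly quasiminimal pregeometry structure is
ℵ₀-homogeneous over the empty set. -/
theorem homogeneity_over_emptyset (L : FirstOrder.Language) (M : Type*) [L.Structure M]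
    (P : Pregeom M) (h : IsWQPS L M P) : HomogEmpty L M := by
  intro n m b b' hbb'
  induction m with
  | zero =>
    intro a
    refine ⟨a, eqqf_congr hbb' (Sum.elim Fin.elim0 id) ?_ ?_⟩ <;>
    · rintro (i | j)
      · exact i.elim0
      · rfl
  | succ m ih =>
    intro a
    obtain ⟨a'', iha⟩ := ih (fun i => a i.succ)
    obtain ⟨x', hx'⟩ := step_one h
      (fun i : Fin (m + n) => Sum.elim (fun i => a i.succ) b (finSumFinEquiv.symm i))
      (fun i : Fin (m + n) => Sum.elim a'' b' (finSumFinEquiv.symm i))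
      (eqqf_comp iha finSumFinEquiv.symm) (a 0)
    refine ⟨Fin.cons x' a'', eqqf_congr hx'
      (Sum.elim (Fin.cases 0 (fun j => (finSumFinEquiv (Sum.inl j)).succ))
        (fun j => (finSumFinEquiv (Sum.inr j)).succ)) ?_ ?_⟩
    · rintro (i | j)
      · induction i using Fin.cases with
        | zero => simp
        | succ j => simp
      · simp
    · rintro (i | j)
      · induction i using Fin.cases with
        | zero => simp
        | succ j => simp
      · simp


end QM
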